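/- Let B = ⟨a, t ∣ t⁻¹a²t = a³⟩ be the Baumslag–Solitar group BS(2,3), let F be the subgroup of B generated by t and [a, t⁻¹at], and let φ : B → B be the endomorphism with φ(a) = a² and φ(t) = t. Then the sequence of subgroups (φ⁻ᵏ(F))_{k ∈ ℕ} is strictly increasing: for every k ∈ ℕ, the preimage subgroup φ⁻ᵏ(F) is strictly contained in φ⁻⁽ᵏ⁺¹⁾(F). -/

import Mathlib

/-- The generator `a` of the Baumslag–Solitar group `BS(2,3)`,
as an element of the free group on `Bool` (`true ↦ a`, `false ↦ t`). -/
def bsA : FreeGroup Bool := FreeGroup.of true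

/-- The generator `t` of the Baumslag–Solitar group `BS(2,3)`. -/
def bsT : FreeGroup Bool := FreeGroup.of false

/-- The single relator `t⁻¹ a² t a⁻³` of `BS(2,3)`. -/
def bsRels : Set (FreeGroup Bool) := {bsT⁻¹ * bsA ^ 2 * bsT * bsA ^ (-3 : ℤ)}

/-- The Baumslag–Solitar group `BS(2,3) = ⟨a, t ∣ t⁻¹a²t = a³⟩`. -/
abbrev BS23 : Type := PresentedGroup bsRels

/-- The image of the generator `a` in `BS(2,3)`. -/
def aB : BS23 := PresentedGroup.of true

/-- The image of the generator `t` in `BS(2,3)`. -/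
def tB : BS23 := PresentedGroup.of false

/-- The commutator with the convention `[x, y] := x⁻¹y⁻¹xy`. -/
def pcomm {G : Type*} [Group G] (x y : G) : G := x⁻¹ * y⁻¹ * x * y

/-- The element `c := [a, t⁻¹at]` of `BS(2,3)`. -/
def cB : BS23 := pcomm aB (tB⁻¹ * aB * tB)

/-- The subgroup `F = ⟨t, [a, t⁻¹at]⟩` of `BS(2,3)`. -/
def Fsub : Subgroup BS23 := Subgroup.closure {tB, cB}
/-- The `k`-fold composite `φ∘⋯∘φ` of an endomorphism `φ`. -/
def iterHom {G : Type*} [Group G] (φ : G →* G) : ℕ → (G →* G)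
  | 0 => MonoidHom.id G
  | k + 1 => (iterHom φ k).comp φ

/-! ### The defining relation in `BS(2,3)` -/

lemma bs_rel : tB⁻¹ * aB ^ 2 * tB = aB ^ 3 := by
  have h : PresentedGroup.mk bsRels (bsT⁻¹ * bsA ^ 2 * bsT * bsA ^ (-3 : ℤ)) = 1 := by
    show (QuotientGroup.mk _ : BS23) = 1
    rw [QuotientGroup.eq_one_iff]
    exact Subgroup.subset_normalClosure rfl
  have h2 : tB⁻¹ * aB ^ 2 * tB * aB ^ (-3 : ℤ) = 1 := by
    simpa [tB, aB, bsT, bsA, PresentedGroup.of, map_mul, map_inv, map_pow, map_zpow] using h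
  calc tB⁻¹ * aB ^ 2 * tB = tB⁻¹ * aB ^ 2 * tB * aB ^ (-3:ℤ) * aB ^ (3:ℤ) := by group
  _ = 1 * aB ^ (3:ℤ) := by rw [h2]
  _ = aB ^ 3 := by group

/-! ### An HNN extension model used to show `cB ≠ 1` -/

noncomputable section
open Multiplicative Subgroup

abbrev Mℤ := Multiplicative ℤ
def gg : Mℤ := ofAdd 1
def Asub : Subgroup Mℤ := zpowers (gg ^ 2)
def Bsub : Subgroup Mℤ := zpowers (gg ^ 3)

lemma mem_Asub {x : Mℤ} : x ∈ Asub ↔ (2 : ℤ) ∣ toAdd x := by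
  constructor
  · rintro ⟨n, rfl⟩
    refine ⟨n, ?_⟩
    simp [gg, ← ofAdd_zsmul]
    ring
  · rintro ⟨n, hn⟩
    refine ⟨n, ?_⟩
    apply Multiplicative.toAdd.injective
    simp [gg]
    omega

lemma mem_Bsub {x : Mℤ} : x ∈ Bsub ↔ (3 : ℤ) ∣ toAdd x := by
  constructor
  · rintro ⟨n, rfl⟩
    refine ⟨n, ?_⟩
    simp [gg, ← ofAdd_zsmul]
    ring
  · rintro ⟨n, hn⟩
    refine ⟨n, ?_⟩
    apply Multiplicative.toAdd.injective
    simp [gg]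
    omega

def fAB : Asub →* Bsub where
  toFun x := ⟨ofAdd (toAdd (x : Mℤ) / 2 * 3),
    mem_Bsub.2 ⟨toAdd (x : Mℤ) / 2, by rw [toAdd_ofAdd]; ring⟩⟩
  map_one' := by ext; simp
  map_mul' x y := by
    ext
    obtain ⟨m, hm⟩ := mem_Asub.1 x.2
    obtain ⟨n, hn⟩ := mem_Asub.1 y.2
    apply Multiplicative.toAdd.injective
    simp only [MulMemClass.coe_mul, toAdd_mul, toAdd_ofAdd]
    change (toAdd (x : Mℤ) + toAdd (y : Mℤ)) / 2 * 3 = toAdd (x : Mℤ) / 2 * 3 + toAdd (y : Mℤ) / 2 * 3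
    omega

lemma fAB_coe (x : Asub) : (fAB x : Mℤ) = ofAdd (toAdd (x : Mℤ) / 2 * 3) := rfl

lemma fAB_bij : Function.Bijective fAB := by
  constructor
  · rintro ⟨x, hx⟩ ⟨y, hy⟩ h
    obtain ⟨m, hm⟩ := mem_Asub.1 hx
    obtain ⟨n, hn⟩ := mem_Asub.1 hy
    apply Subtype.ext
    apply Multiplicative.toAdd.injective
    have := congrArg (fun z : Bsub => toAdd (z : Mℤ)) h
    simp only [fAB_coe, toAdd_ofAdd] at this
    simp only []
    omega
  · rintro ⟨y, hy⟩
    obtain ⟨n, hn⟩ := mem_Bsub.1 hy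
    refine ⟨⟨ofAdd (2 * n), mem_Asub.2 ⟨n, by simp; ring⟩⟩, ?_⟩
    apply Subtype.ext
    apply Multiplicative.toAdd.injective
    simp only [fAB_coe, toAdd_ofAdd]
    omega

def eAB : Asub ≃* Bsub := MulEquiv.ofBijective fAB fAB_bij

abbrev HG := HNNExtension Mℤ Asub Bsub eAB

lemma eAB_g2 : (eAB ⟨gg ^ 2, mem_Asub.2 ⟨1, by simp [gg]⟩⟩ : Mℤ) = gg ^ 3 := by
  show (fAB _ : Mℤ) = _
  apply Multiplicative.toAdd.injective
  simp [fAB_coe, gg]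

lemma key_rel : (HNNExtension.t : HG) * HNNExtension.of (gg ^ 2) =
    HNNExtension.of (gg ^ 3) * HNNExtension.t := by
  have := HNNExtension.t_mul_of (φ := eAB) ⟨gg ^ 2, mem_Asub.2 ⟨1, by simp [gg]⟩⟩
  rw [show ((⟨gg ^ 2, mem_Asub.2 ⟨1, by simp [gg]⟩⟩ : Asub) : Mℤ) = gg ^ 2 from rfl] at this
  rw [this, eAB_g2]

def fgen : Bool → HG := fun b => match b with
  | true => HNNExtension.of gg
  | false => (HNNExtension.t)⁻¹

lemma fgen_rel : ∀ r ∈ bsRels, FreeGroup.lift fgen r = 1 := by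
  rintro r rfl
  simp only [bsT, bsA, map_mul, map_inv, map_pow, map_zpow, FreeGroup.lift_apply_of, fgen, inv_inv]
  rw [← map_pow, key_rel]
  rw [mul_assoc, mul_assoc, mul_inv_cancel_left, map_pow]
  group

def ψ : BS23 →* HG := PresentedGroup.toGroup fgen_rel

lemma ψa : ψ aB = HNNExtension.of gg := PresentedGroup.toGroup.of fgen_rel
lemma ψt : ψ tB = (HNNExtension.t)⁻¹ := PresentedGroup.toGroup.of fgen_rel

def wrd : HNNExtension.NormalWord.ReducedWord Mℤ Asub Bsub where
  head := gg⁻¹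
  toList := [(1, gg⁻¹), (-1, gg), (1, gg), (-1, 1)]
  chain := by
    refine List.isChain_cons_cons.2 ⟨?_, List.isChain_cons_cons.2 ⟨?_,
      List.isChain_cons_cons.2 ⟨?_, List.isChain_singleton _⟩⟩⟩
    · intro h
      have := mem_Asub.1 h
      rw [show toAdd (gg⁻¹) = -1 from rfl] at this
      omega
    · intro h
      have := mem_Bsub.1 h
      rw [show toAdd gg = 1 from rfl] at this
      omega
    · intro h
      have := mem_Asub.1 h
      rw [show toAdd gg = 1 from rfl] at this
      omega

lemma wrd_prod : wrd.prod eAB = ψ cB := by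
  show HNNExtension.of gg⁻¹ * _ = _
  simp only [wrd, List.map_cons, List.map_nil, List.prod_cons, List.prod_nil]
  simp only [cB, pcomm, map_mul, map_inv, ψa, ψt, inv_inv]
  simp only [Units.val_one, Units.val_neg, zpow_one, zpow_neg, map_one, map_inv]
  group

lemma cB_ne_one : cB ≠ 1 := by
  intro h
  have h1 : wrd.prod eAB = (HNNExtension.NormalWord.ReducedWord.empty Mℤ Asub Bsub).prod eAB := by
    rw [wrd_prod, h, map_one]
    simp [HNNExtension.NormalWord.ReducedWord.prod, HNNExtension.NormalWord.ReducedWord.empty]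
  have := (HNNExtension.ReducedWord.map_fst_eq_and_of_prod_eq eAB h1).1
  simp [wrd, HNNExtension.NormalWord.ReducedWord.empty] at this

/-! ### The `t`-exponent homomorphism -/

def fcnt : Bool → Mℤ := fun b => match b with
  | true => 1
  | false => gg

lemma fcnt_rel : ∀ r ∈ bsRels, FreeGroup.lift fcnt r = 1 := by
  rintro r rfl
  simp only [bsT, bsA, map_mul, map_inv, map_pow, map_zpow, FreeGroup.lift_apply_of, fcnt]
  group

def π : BS23 →* Mℤ := PresentedGroup.toGroup fcnt_rel

lemma πa : π aB = 1 := PresentedGroup.toGroup.of fcnt_rel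
lemma πt : π tB = gg := PresentedGroup.toGroup.of fcnt_rel

lemma cB_not_mem_zpowers : cB ∉ Subgroup.closure ({tB} : Set BS23) := by
  intro h
  obtain ⟨n, hn⟩ := Subgroup.mem_closure_singleton.1 h
  have h1 : π (tB ^ n) = π cB := by rw [hn]
  have h2 : π cB = 1 := by
    simp only [cB, pcomm, map_mul, map_inv, πa, πt]
    group
  rw [map_zpow, πt, h2] at h1
  have hn0 : n = 0 := by
    have := congrArg toAdd h1
    simpa [gg, ← ofAdd_zsmul] using this
  rw [hn0] at hn
  exact cB_ne_one (by simpa using hn.symm)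

end

/-! ### Properties of the endomorphism `φ` -/

section Phi
variable (φ : BS23 →* BS23) (ha : φ aB = aB ^ 2) (ht : φ tB = tB)

include ha ht in
lemma phi_cB : φ cB = 1 := by
  have h1 : φ cB = pcomm (aB ^ 2) (tB⁻¹ * aB ^ 2 * tB) := by
    simp only [cB, pcomm, map_mul, map_inv, ha, ht, mul_assoc]
  rw [h1, bs_rel]
  unfold pcomm
  group

include ha ht in
lemma phi_surj : Function.Surjective φ := by
  rw [← MonoidHom.range_eq_top, eq_top_iff, ← PresentedGroup.closure_range_of bsRels]
  rw [Subgroup.closure_le]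
  rintro x ⟨b, rfl⟩
  cases b
  · exact ⟨tB, ht⟩
  · refine ⟨tB⁻¹ * aB * tB * aB⁻¹, ?_⟩
    have : φ (tB⁻¹ * aB * tB * aB⁻¹) = tB⁻¹ * aB ^ 2 * tB * (aB ^ 2)⁻¹ := by
      simp only [map_mul, map_inv, ha, ht]
    rw [this, bs_rel]
    show aB ^ 3 * (aB ^ 2)⁻¹ = aB
    group

include ha ht in
lemma map_Fsub : Fsub.map φ = Subgroup.closure ({tB} : Set BS23) := by
  rw [Fsub, MonoidHom.map_closure]
  have himg : φ '' {tB, cB} = {tB, 1} := by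
    rw [Set.image_insert_eq, Set.image_singleton, ht, phi_cB φ ha ht]
  rw [himg]
  apply le_antisymm
  · rw [Subgroup.closure_le]
    rintro x (rfl | rfl)
    · exact Subgroup.subset_closure rfl
    · exact Subgroup.one_mem _
  · exact Subgroup.closure_mono (by simp)

include ha ht in
lemma map_Fsub_le : Fsub.map φ ≤ Fsub := by
  rw [map_Fsub φ ha ht, Subgroup.closure_le]
  rintro x rfl
  exact Subgroup.subset_closure (by simp)

lemma iter_comm (k : ℕ) (x : BS23) : iterHom φ k (φ x) = φ (iterHom φ k x) := by
  induction k generalizing x with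
  | zero => rfl
  | succ k ih =>
    show iterHom φ k (φ (φ x)) = φ (iterHom φ k (φ x))
    exact ih (φ x)

lemma comap_succ (k : ℕ) :
    Fsub.comap (iterHom φ (k + 1)) = (Fsub.comap (iterHom φ k)).comap φ := by
  show Fsub.comap ((iterHom φ k).comp φ) = _
  rw [Subgroup.comap_comap]

include ha ht in
lemma chain_le (k : ℕ) :
    Fsub.comap (iterHom φ k) ≤ Fsub.comap (iterHom φ (k + 1)) := by
  intro x hx
  have : iterHom φ (k + 1) x = φ (iterHom φ k x) := iter_comm φ k x
  show iterHom φ (k + 1) x ∈ Fsub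
  rw [this]
  exact map_Fsub_le φ ha ht ⟨iterHom φ k x, hx, rfl⟩

include ha ht in
lemma eq_imp (k : ℕ) (h : Fsub.comap (iterHom φ k) = Fsub.comap (iterHom φ (k + 1))) :
    Fsub = Fsub.comap φ := by
  induction k with
  | zero =>
    rw [comap_succ] at h
    simpa [iterHom, Subgroup.comap_id] using h
  | succ k ih =>
    apply ih
    rw [comap_succ, comap_succ] at h
    exact Subgroup.comap_injective (phi_surj φ ha ht) h

end Phi

/-- If `φ : BS(2,3) → BS(2,3)` is the endomorphism with `φ(a) = a²` and `φ(t) = t`,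
then the sequence of preimage subgroups `(φ⁻ᵏ(F))_{k ∈ ℕ}` is strictly increasing:
for every `k`, `φ⁻ᵏ(F)` is strictly contained in `φ⁻⁽ᵏ⁺¹⁾(F)`. -/
theorem preimages_strictly_increasing (φ : BS23 →* BS23)
    (ha : φ aB = aB ^ 2) (ht : φ tB = tB) :
    ∀ k : ℕ, Fsub.comap (iterHom φ k) < Fsub.comap (iterHom φ (k + 1)) := by
  intro k
  refine lt_of_le_of_ne (chain_le φ ha ht k) (fun h => ?_)
  have hF : Fsub = Fsub.comap φ := eq_imp φ ha ht k h
  have hmap : Fsub.map φ = Fsub := by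
    conv_lhs => rw [hF]
    exact Subgroup.map_comap_eq_self_of_surjective (phi_surj φ ha ht) Fsub
  have : Fsub = Subgroup.closure ({tB} : Set BS23) := by
    rw [← hmap, map_Fsub φ ha ht]
  exact cB_not_mem_zpowers (this ▸ Subgroup.subset_closure (by simp : cB ∈ ({tB, cB} : Set BS23)))
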